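/- Let N ≥ 1, λ, μ > 0, β ∈ (0, λ), T ≥ 0 and C̃ > 0. Let ψ_T : ℝ^N → ℝ be bounded and continuous, and let w : [T,∞) → C^b(ℝ^N) be continuous with ∥w(s)∥_∞ ≤ C̃ e^{−β(s−T)} for all s ≥ T. Define ψ(t)(x) = (e^{(t−T)(Δ−λI)}ψ_T)(x) + μ ∫_T^t (e^{(s−T)(Δ−λI)} w(t−s+T))(x) ds for t > T. Then ∥ψ(t)∥_∞ ≤ e^{−β(t−T)} ( ∥ψ_T∥_∞ + μ C̃/(λ−β) ) for all t > T. -/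

import Mathlib

open MeasureTheory
open scoped BoundedContinuousFunction

noncomputable section

/-- The damped heat semigroup `e^{t(Δ-ρI)}` applied to `w`. -/
def dampedHeat (N : ℕ) (ρ t : ℝ) (w : EuclideanSpace ℝ (Fin N) → ℝ)
    (x : EuclideanSpace ℝ (Fin N)) : ℝ :=
  ∫ y : EuclideanSpace ℝ (Fin N),
    (4 * Real.pi * t) ^ (-(N : ℝ) / 2) * Real.exp (-‖x - y‖ ^ 2 / (4 * t) - ρ * t) * w y

lemma integrable_gauss {E : Type*} [NormedAddCommGroup E] [InnerProductSpace ℝ E]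
    [FiniteDimensional ℝ E] [MeasurableSpace E] [BorelSpace E] {b : ℝ} (hb : 0 < b) :
    Integrable (fun v : E => Real.exp (-b * ‖v‖ ^ 2)) := by
  have h := (GaussianFourier.integrable_cexp_neg_mul_sq_norm_add (V := E)
    (b := (b : ℂ)) (by simpa using hb) 0 0).norm
  convert h using 2 with v
  rw [Complex.norm_exp]
  norm_num
  exact Or.inl (by rw [← Complex.ofReal_pow, Complex.ofReal_re])

lemma dampedHeat_abs_le (N : ℕ) (ρ t : ℝ) (ht : 0 < t) (g : EuclideanSpace ℝ (Fin N) → ℝ)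
    (M : ℝ) (hM : ∀ y, |g y| ≤ M) (x : EuclideanSpace ℝ (Fin N)) :
    |dampedHeat N ρ t g x| ≤ Real.exp (-ρ * t) * M := by
  have hM0 : 0 ≤ M := le_trans (abs_nonneg _) (hM x)
  set b : ℝ := 1 / (4 * t) with hbdef
  have hb : 0 < b := by positivity
  set C : ℝ := (4 * Real.pi * t) ^ (-(N : ℝ) / 2) with hCdef
  have hC : 0 < C := Real.rpow_pos_of_pos (by positivity) _
  have hint : Integrable (fun y : EuclideanSpace ℝ (Fin N) =>
      C * Real.exp (-ρ * t) * (Real.exp (-b * ‖x - y‖ ^ 2) * M)) := by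
    exact (((integrable_gauss hb).comp_sub_left x).mul_const M).const_mul _
  have hbound : ∀ y : EuclideanSpace ℝ (Fin N),
      ‖C * Real.exp (-‖x - y‖ ^ 2 / (4 * t) - ρ * t) * g y‖ ≤
        C * Real.exp (-ρ * t) * (Real.exp (-b * ‖x - y‖ ^ 2) * M) := by
    intro y
    have hexp : Real.exp (-‖x - y‖ ^ 2 / (4 * t) - ρ * t)
        = Real.exp (-b * ‖x - y‖ ^ 2) * Real.exp (-ρ * t) := by
      rw [← Real.exp_add]
      congr 1
      rw [hbdef]
      field_simp
      ring
    rw [Real.norm_eq_abs, abs_mul, abs_mul, hexp, abs_of_pos hC,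
      abs_of_pos (mul_pos (Real.exp_pos _) (Real.exp_pos _))]
    calc C * (Real.exp (-b * ‖x - y‖ ^ 2) * Real.exp (-ρ * t)) * |g y|
        ≤ C * (Real.exp (-b * ‖x - y‖ ^ 2) * Real.exp (-ρ * t)) * M := by
          apply mul_le_mul_of_nonneg_left (hM y); positivity
      _ = C * Real.exp (-ρ * t) * (Real.exp (-b * ‖x - y‖ ^ 2) * M) := by ring
  have h1 : |dampedHeat N ρ t g x| ≤
      ∫ y : EuclideanSpace ℝ (Fin N),
        C * Real.exp (-ρ * t) * (Real.exp (-b * ‖x - y‖ ^ 2) * M) := by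
    rw [← Real.norm_eq_abs]
    exact norm_integral_le_of_norm_le hint (Filter.Eventually.of_forall hbound)
  have h2 : (∫ y : EuclideanSpace ℝ (Fin N),
      C * Real.exp (-ρ * t) * (Real.exp (-b * ‖x - y‖ ^ 2) * M)) =
      C * Real.exp (-ρ * t) * M * ((Real.pi / b) ^ ((N : ℝ) / 2)) := by
    rw [MeasureTheory.integral_const_mul]
    have : (∫ y : EuclideanSpace ℝ (Fin N), Real.exp (-b * ‖x - y‖ ^ 2) * M)
        = (∫ y : EuclideanSpace ℝ (Fin N), Real.exp (-b * ‖x - y‖ ^ 2)) * M := by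
      rw [MeasureTheory.integral_mul_const]
    rw [this, integral_sub_left_eq_self (fun y => Real.exp (-b * ‖y‖ ^ 2)) volume x,
      GaussianFourier.integral_rexp_neg_mul_sq_norm hb, finrank_euclideanSpace_fin]
    ring
  rw [h2] at h1
  have hpib : Real.pi / b = 4 * Real.pi * t := by
    rw [hbdef]; field_simp
  have hCC : C * (Real.pi / b) ^ ((N : ℝ) / 2) = 1 := by
    rw [hpib, hCdef, ← Real.rpow_add (by positivity)]
    rw [show -(N:ℝ) / 2 + (N:ℝ) / 2 = 0 by ring, Real.rpow_zero]
  calc |dampedHeat N ρ t g x| ≤ C * Real.exp (-ρ * t) * M * (Real.pi / b) ^ ((N : ℝ) / 2) := h1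
    _ = (C * (Real.pi / b) ^ ((N : ℝ) / 2)) * (Real.exp (-ρ * t) * M) := by ring
    _ = Real.exp (-ρ * t) * M := by rw [hCC, one_mul]

lemma int_exp_Ioc {c : ℝ} (hc : 0 < c) {T t : ℝ} (h : T ≤ t) :
    ∫ s in Set.Ioc T t, Real.exp (-c * (s - T)) = (1 - Real.exp (-c * (t - T))) / c := by
  rw [← intervalIntegral.integral_of_le h]
  have hderiv : ∀ u ∈ Set.uIcc T t, HasDerivAt (fun s => -Real.exp (-c * (s - T)) / c)
      (Real.exp (-c * (u - T))) u := by
    intro u _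
    have h1 : HasDerivAt (fun s : ℝ => -c * (s - T)) (-c) u := by
      simpa using ((hasDerivAt_id u).sub_const T).const_mul (-c)
    have h3 := ((h1.exp).neg).div_const c
    exact h3.congr_deriv (by rw [div_eq_iff hc.ne']; ring)
  rw [intervalIntegral.integral_eq_sub_of_hasDerivAt hderiv
    ((Real.continuous_exp.comp (by continuity)).intervalIntegrable T t)]
  rw [sub_self, mul_zero, Real.exp_zero]
  ring

theorem stmt_12 (N : ℕ) (hN : 1 ≤ N) (lam μ β : ℝ) (hlam : 0 < lam) (hμ : 0 < μ)
    (hβ0 : 0 < β) (hβ : β < lam) (T : ℝ) (hT : 0 ≤ T) (Ctil : ℝ) (hCtil : 0 < Ctil)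
    (ψT : EuclideanSpace ℝ (Fin N) → ℝ) (hψTc : Continuous ψT)
    (hψTb : ∃ M : ℝ, ∀ x, |ψT x| ≤ M)
    (w : ℝ → (EuclideanSpace ℝ (Fin N) →ᵇ ℝ))
    (hw : ContinuousOn w (Set.Ici T))
    (hwb : ∀ s : ℝ, T ≤ s → ‖w s‖ ≤ Ctil * Real.exp (-β * (s - T)))
    (ψ : ℝ → EuclideanSpace ℝ (Fin N) → ℝ)
    (hψ : ∀ (t : ℝ) (x : EuclideanSpace ℝ (Fin N)),
      ψ t x = dampedHeat N lam (t - T) ψT x +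
        μ * ∫ s in Set.Ioc T t, dampedHeat N lam (s - T) (⇑(w (t - s + T))) x) :
    ∀ t : ℝ, T < t →
      (⨆ x, |ψ t x|) ≤
        Real.exp (-β * (t - T)) * ((⨆ x, |ψT x|) + μ * Ctil / (lam - β)) := by
  obtain ⟨M0, hM0⟩ := hψTb
  set Msup := ⨆ x, |ψT x| with hMsupdef
  have hbdd : BddAbove (Set.range fun x => |ψT x|) := ⟨M0, by rintro _ ⟨x, rfl⟩; exact hM0 x⟩
  have hMs : ∀ x, |ψT x| ≤ Msup := fun x => le_ciSup hbdd x
  have hMs0 : 0 ≤ Msup := le_trans (abs_nonneg _) (hMs 0)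
  intro t ht
  set c : ℝ := lam - β with hcdef
  have hc : 0 < c := by linarith
  have ht' : 0 < t - T := by linarith
  have key : ∀ x, |ψ t x| ≤
      Real.exp (-β * (t - T)) * (Msup + μ * Ctil / (lam - β)) := by
    intro x
    rw [hψ t x]
    -- Bound for the first term
    have h1 : |dampedHeat N lam (t - T) ψT x| ≤ Real.exp (-lam * (t - T)) * Msup :=
      dampedHeat_abs_le N lam (t - T) ht' ψT Msup hMs x
    -- Bound for the integral term
    set B : ℝ → ℝ := fun s => Ctil * Real.exp (-β * (t - T)) * Real.exp (-c * (s - T))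
      with hBdef
    have hBint : IntegrableOn B (Set.Ioc T t) := by
      apply Continuous.integrableOn_Ioc
      continuity
    have hBae : ∀ᵐ s ∂(volume.restrict (Set.Ioc T t)),
        ‖dampedHeat N lam (s - T) (⇑(w (t - s + T))) x‖ ≤ B s := by
      rw [ae_restrict_iff' measurableSet_Ioc]
      apply Filter.Eventually.of_forall
      intro s hs
      have hs1 : 0 < s - T := by linarith [hs.1]
      have hs2 : T ≤ t - s + T := by linarith [hs.2]
      have hwnorm : ∀ y, |(w (t - s + T)) y| ≤ ‖w (t - s + T)‖ := by
        intro y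
        simpa [Real.norm_eq_abs] using
          BoundedContinuousFunction.norm_coe_le_norm (w (t - s + T)) y
      have hb1 : |dampedHeat N lam (s - T) (⇑(w (t - s + T))) x| ≤
          Real.exp (-lam * (s - T)) * ‖w (t - s + T)‖ :=
        dampedHeat_abs_le N lam (s - T) hs1 _ _ hwnorm x
      have hb2 : ‖w (t - s + T)‖ ≤ Ctil * Real.exp (-β * (t - s)) := by
        have := hwb (t - s + T) hs2
        simpa using this
      have hb3 : Real.exp (-lam * (s - T)) * ‖w (t - s + T)‖ ≤
          Real.exp (-lam * (s - T)) * (Ctil * Real.exp (-β * (t - s))) :=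
        mul_le_mul_of_nonneg_left hb2 (Real.exp_pos _).le
      have e1 : Real.exp (-lam * (s - T)) * Real.exp (-β * (t - s))
          = Real.exp (-β * (t - T)) * Real.exp (-(lam - β) * (s - T)) := by
        rw [← Real.exp_add, ← Real.exp_add]; congr 1; ring
      have hb4 : Real.exp (-lam * (s - T)) * (Ctil * Real.exp (-β * (t - s))) = B s := by
        simp only [hBdef, hcdef]
        calc Real.exp (-lam * (s - T)) * (Ctil * Real.exp (-β * (t - s)))
            = Ctil * (Real.exp (-lam * (s - T)) * Real.exp (-β * (t - s))) := by ring
          _ = Ctil * (Real.exp (-β * (t - T)) * Real.exp (-(lam - β) * (s - T))) := by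
              rw [e1]
          _ = Ctil * Real.exp (-β * (t - T)) * Real.exp (-(lam - β) * (s - T)) := by ring
      rw [Real.norm_eq_abs]
      calc |dampedHeat N lam (s - T) (⇑(w (t - s + T))) x| ≤ _ := hb1
        _ ≤ _ := hb3
        _ = B s := hb4
    have h2 : |∫ s in Set.Ioc T t, dampedHeat N lam (s - T) (⇑(w (t - s + T))) x| ≤
        ∫ s in Set.Ioc T t, B s := by
      rw [← Real.norm_eq_abs]
      exact norm_integral_le_of_norm_le hBint hBae
    have h3 : (∫ s in Set.Ioc T t, B s) ≤ Ctil * Real.exp (-β * (t - T)) / c := by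
      simp only [hBdef]
      rw [MeasureTheory.integral_const_mul, int_exp_Ioc hc ht.le]
      have h5 : (1 - Real.exp (-c * (t - T))) / c ≤ 1 / c := by
        gcongr
        linarith [Real.exp_pos (-c * (t - T))]
      calc Ctil * Real.exp (-β * (t - T)) * ((1 - Real.exp (-c * (t - T))) / c)
          ≤ Ctil * Real.exp (-β * (t - T)) * (1 / c) := by
            apply mul_le_mul_of_nonneg_left h5; positivity
        _ = Ctil * Real.exp (-β * (t - T)) / c := by ring
    have hexp_le : Real.exp (-lam * (t - T)) ≤ Real.exp (-β * (t - T)) := by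
      apply Real.exp_le_exp.2
      nlinarith
    calc |dampedHeat N lam (t - T) ψT x +
          μ * ∫ s in Set.Ioc T t, dampedHeat N lam (s - T) (⇑(w (t - s + T))) x|
        ≤ |dampedHeat N lam (t - T) ψT x| +
          |μ * ∫ s in Set.Ioc T t, dampedHeat N lam (s - T) (⇑(w (t - s + T))) x| :=
          abs_add_le _ _
      _ ≤ Real.exp (-lam * (t - T)) * Msup + μ * (Ctil * Real.exp (-β * (t - T)) / c) := by
          apply add_le_add h1
          rw [abs_mul, abs_of_pos hμ]
          exact mul_le_mul_of_nonneg_left (le_trans h2 h3) hμ.le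
      _ ≤ Real.exp (-β * (t - T)) * Msup + μ * (Ctil * Real.exp (-β * (t - T)) / c) :=
          add_le_add_left (mul_le_mul_of_nonneg_right hexp_le hMs0) _
      _ = Real.exp (-β * (t - T)) * (Msup + μ * Ctil / (lam - β)) := by
          rw [hcdef]; field_simp
  exact ciSup_le key
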